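/- Let r,k ∈ ℕ with k ≥ 1, let φ be a first-order formula in the language of graphs with free variables indexed by Fin k that is semantically r-local and 2r-centered, and let G be a simple graph on a finite vertex type V. Then the number of tuples ā ∈ V^k with G ⊨ φ(ā) equals ∑_{a ∈ V} |{ā ∈ (B_a)^k : the first coordinate of ā is a, and the induced subgraph G[B_a] satisfies φ at the corresponding tuple}|, where B_a = N_{(2k−1)r}(a). -/

import Mathlib

open FirstOrder

universe u

/-- `distLE G r a b` : there is a walk in `G` from `a` to `b` of length at most `r`. -/
def distLE {V : Type*} (G : SimpleGraph V) (r : ℕ) (a b : V) : Prop :=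
  ∃ w : G.Walk a b, w.length ≤ r

/-- The `r`-ball around a vertex `a`. -/
def ball {V : Type*} (G : SimpleGraph V) (r : ℕ) (a : V) : Set V :=
  {b | distLE G r a b}

/-- The `r`-neighborhood of a tuple: `⋃ i, N_r(a i)`. -/
def tball {V : Type*} (G : SimpleGraph V) (r : ℕ) {k : ℕ} (a : Fin k → V) : Set V :=
  ⋃ i, ball G r (a i)

theorem mem_tball {V : Type*} (G : SimpleGraph V) (r : ℕ) {k : ℕ} (a : Fin k → V)
    (i : Fin k) : a i ∈ tball G r a :=
  Set.mem_iUnion.2 ⟨i, SimpleGraph.Walk.nil, by simp⟩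

/-- A formula with `k` free variables is semantically `r`-local if its truth value at a
tuple only depends on the graph induced on the `r`-neighborhood of the tuple. -/
def SemLocal (r k : ℕ) (φ : Language.graph.Formula (Fin k)) : Prop :=
  ∀ (V : Type u) (G : SimpleGraph V) (a : Fin k → V),
    (letI := G.structure
     φ.Realize a) ↔
      (letI := (G.induce (tball G r a)).structure
       φ.Realize (fun i => (⟨a i, mem_tball G r a i⟩ : tball G r a)))

/-- The `r`-distance type (closeness graph) of a tuple `a : Fin k → V`:
an edge between `i ≠ j` iff `dist_G (a i) (a j) ≤ r`. -/
def closeGraph {V : Type*} (G : SimpleGraph V) (r : ℕ) {k : ℕ} (a : Fin k → V) :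
    SimpleGraph (Fin k) where
  Adj i j := i ≠ j ∧ distLE G r (a i) (a j)
  symm := by
    constructor
    rintro i j ⟨hij, w, hw⟩
    exact ⟨hij.symm, w.reverse, by simpa using hw⟩
  loopless := by constructor; rintro i ⟨hii, -⟩; exact hii rfl

/-- A formula of arity `k` is `2r`-centered if whenever it holds at a tuple, the
`2r`-distance type of the tuple is connected. -/
def Centered (r k : ℕ) (φ : Language.graph.Formula (Fin k)) : Prop :=
  ∀ (V : Type u) (G : SimpleGraph V) (a : Fin k → V),
    (letI := G.structure
     φ.Realize a) → (closeGraph G (2 * r) a).Connected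

section AuxDist

variable {W : Type*} {G : SimpleGraph W}

lemma distLE_self (r : ℕ) (a : W) : distLE G r a a := ⟨.nil, by simp⟩

lemma distLE_mono' {m n : ℕ} (h : m ≤ n) {a b : W} : distLE G m a b → distLE G n a b :=
  fun ⟨w, hw⟩ => ⟨w, hw.trans h⟩

lemma distLE_trans' {m n : ℕ} {a b c : W} (h1 : distLE G m a b) (h2 : distLE G n b c) :
    distLE G (m + n) a c := by
  obtain ⟨w1, h1⟩ := h1; obtain ⟨w2, h2⟩ := h2
  exact ⟨w1.append w2, by rw [SimpleGraph.Walk.length_append]; omega⟩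

lemma distLE_of_mem_support : ∀ {u v : W} (w : G.Walk u v) {x : W}, x ∈ w.support →
    distLE G w.length u x
  | _, _, .nil, x, hx => by
    simp only [SimpleGraph.Walk.support_nil, List.mem_singleton] at hx
    subst hx; exact distLE_self _ _
  | _, _, .cons h p, x, hx => by
    rw [SimpleGraph.Walk.support_cons, List.mem_cons] at hx
    rcases hx with rfl | hx
    · exact ⟨.nil, by simp⟩
    · obtain ⟨w, hw⟩ := distLE_of_mem_support p hx
      exact ⟨.cons h w, by simp; omega⟩

lemma distLE_coe {s : Set W} {n : ℕ} {x y : ↥s} (h : distLE (G.induce s) n x y) :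
    distLE G n ↑x ↑y := by
  obtain ⟨w, hw⟩ := h
  exact ⟨w.map (SimpleGraph.Embedding.induce s).toHom, (SimpleGraph.Walk.length_map _ w).trans_le hw⟩

lemma walk_lift {s : Set W} : ∀ {u v : W} (w : G.Walk u v) (_ : ∀ x ∈ w.support, x ∈ s)
    (hu : u ∈ s) (hv : v ∈ s),
    ∃ w' : (G.induce s).Walk ⟨u, hu⟩ ⟨v, hv⟩, w'.length = w.length
  | _, _, .nil, _, _, _ => ⟨.nil, rfl⟩
  | u, v, .cons (v := b) h p, hs, hu, hv => by
    have hb : b ∈ s := hs _ (by simp)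
    obtain ⟨w', hw'⟩ := walk_lift p (fun x hx => hs x (by simp [hx])) hb hv
    exact ⟨.cons (by simpa using h) w', by simp [hw']⟩

lemma distLE_lift {s : Set W} {n : ℕ} {u v : W} (hu : u ∈ s) (hv : v ∈ s)
    (h : distLE G n u v) (hball : ball G n u ⊆ s) :
    distLE (G.induce s) n ⟨u, hu⟩ ⟨v, hv⟩ := by
  obtain ⟨w, hw⟩ := h
  obtain ⟨w', hw'⟩ := walk_lift w
    (fun x hx => hball (distLE_mono' hw (distLE_of_mem_support w hx))) hu hv
  exact ⟨w', by omega⟩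

lemma distLE_of_closeWalk {r k : ℕ} {a : Fin k → W} : ∀ {i j : Fin k}
    (w : (closeGraph G r a).Walk i j), distLE G (w.length * r) (a i) (a j)
  | _, _, .nil => by simpa using distLE_self 0 _
  | _, _, .cons h p => by
    have h2 := distLE_of_closeWalk p
    have := distLE_trans' h.2 h2
    apply distLE_mono' _ this
    simp [Nat.succ_mul]; omega

lemma dist_bound {r k : ℕ} (hk : 0 < k) {a : Fin k → W}
    (hc : (closeGraph G (2 * r) a).Connected) (i : Fin k) :
    distLE G ((2 * k - 2) * r) (a ⟨0, hk⟩) (a i) := by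
  obtain ⟨w⟩ := hc ⟨0, hk⟩ i
  have hp := w.toPath.2
  have hlen : w.toPath.1.length < k := by
    simpa using hp.length_lt
  have := distLE_of_closeWalk (G := G) w.toPath.1
  apply distLE_mono' _ this
  calc w.toPath.1.length * (2 * r) ≤ (k - 1) * (2 * r) :=
        Nat.mul_le_mul_right _ (by omega)
    _ = (2 * k - 2) * r := by
      obtain ⟨n, rfl⟩ : ∃ n, k = n + 1 := ⟨k - 1, by omega⟩
      have h1 : 2 * (n + 1) - 2 = 2 * n := by omega
      have h2 : n + 1 - 1 = n := by omega
      rw [h1, h2]; ring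

end AuxDist

/-- A graph isomorphism induces a first-order equivalence of the associated structures. -/
def graphEquivOfIso {A B : Type*} {GA : SimpleGraph A} {GB : SimpleGraph B} (f : GA ≃g GB) :
    letI := GA.structure; letI := GB.structure
    A ≃[Language.graph] B :=
  letI := GA.structure; letI := GB.structure
  { toEquiv := f.toEquiv
    map_fun' := fun F _ => isEmptyElim F
    map_rel' := by
      rintro n ⟨⟩ x
      exact f.map_adj_iff }

/-- Transfer lemma: realization of an `r`-local formula is unchanged when passing to an
induced subgraph containing the `r`-balls of the tuple. -/
lemma transfer_realize {k : ℕ} {r : ℕ} {φ : Language.graph.Formula (Fin k)}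
    (hloc : SemLocal.{u} r k φ) {V : Type u} (G : SimpleGraph V) (s : Set V)
    (b : Fin k → V) (hb : ∀ i, b i ∈ s) (hball : ∀ i, ball G r (b i) ⊆ s) :
    (letI := G.structure; φ.Realize b) ↔
      (letI := (G.induce s).structure; φ.Realize (fun i => (⟨b i, hb i⟩ : s))) := by
  set H := G.induce s with hH
  set b' : Fin k → ↥s := fun i => ⟨b i, hb i⟩ with hb'
  have hmem : ∀ x : ↥s, x ∈ tball H r b' ↔ (x : V) ∈ tball G r b := by
    intro x
    simp only [tball, ball, Set.mem_iUnion, Set.mem_setOf_eq]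
    constructor
    · rintro ⟨i, hi⟩; exact ⟨i, distLE_coe hi⟩
    · rintro ⟨i, hi⟩; exact ⟨i, distLE_lift (hb i) x.2 hi (hball i)⟩
  have hsub : tball G r b ⊆ s := by
    intro x hx
    rcases Set.mem_iUnion.1 hx with ⟨i, hi⟩
    exact hball i hi
  let f : (H.induce (tball H r b')) ≃g (G.induce (tball G r b)) :=
    { toFun := fun x => ⟨((x : ↥s) : V), (hmem _).1 x.2⟩
      invFun := fun y => ⟨⟨↑y, hsub y.2⟩, (hmem _).2 y.2⟩
      left_inv := fun x => rfl
      right_inv := fun y => rfl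
      map_rel_iff' := fun {x y} => Iff.rfl }
  rw [hloc V G b, hloc ↥s H b']
  letI SA := (H.induce (tball H r b')).structure
  letI SB := (G.induce (tball G r b)).structure
  have key := Language.StrongHomClass.realize_formula (L := Language.graph)
    (graphEquivOfIso f) (φ := φ) (v := fun i => ⟨b' i, mem_tball H r b' i⟩)
  have heq : (graphEquivOfIso f) ∘ (fun i => (⟨b' i, mem_tball H r b' i⟩ : tball H r b'))
      = fun i => (⟨b i, mem_tball G r b i⟩ : tball G r b) :=
    funext fun i => Subtype.ext rfl
  rw [heq] at key
  exact key

theorem stmt_15 {V : Type u} [Fintype V] (r k : ℕ) (hk : 0 < k)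
    (φ : Language.graph.Formula (Fin k))
    (hloc : SemLocal.{u} r k φ) (hcent : Centered.{u} r k φ)
    (G : SimpleGraph V) :
    {a : Fin k → V | (letI := G.structure; φ.Realize a)}.ncard =
      ∑ a : V,
        {t : Fin k → ball G ((2 * k - 1) * r) a |
          (t ⟨0, hk⟩ : V) = a ∧
          (letI := (G.induce (ball G ((2 * k - 1) * r) a)).structure
           φ.Realize t)}.ncard := by
  classical
  have hmul : (2 * k - 2) * r + r = (2 * k - 1) * r := by
    rw [← Nat.succ_mul]
    congr 1
    omega
  -- Lemma A
  have lemA : ∀ b : Fin k → V, (letI := G.structure; φ.Realize b) →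
      ∃ h : ∀ i, b i ∈ ball G ((2 * k - 1) * r) (b ⟨0, hk⟩),
        (letI := (G.induce (ball G ((2 * k - 1) * r) (b ⟨0, hk⟩))).structure
         φ.Realize (fun i => (⟨b i, h i⟩ : ball G ((2 * k - 1) * r) (b ⟨0, hk⟩)))) := by
    intro b hreal
    have hc := hcent V G b hreal
    have hd : ∀ i, distLE G ((2 * k - 2) * r) (b ⟨0, hk⟩) (b i) :=
      fun i => dist_bound hk hc i
    have hmem : ∀ i, b i ∈ ball G ((2 * k - 1) * r) (b ⟨0, hk⟩) :=
      fun i => distLE_mono' (Nat.mul_le_mul_right r (by omega)) (hd i)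
    have hball : ∀ i, ball G r (b i) ⊆ ball G ((2 * k - 1) * r) (b ⟨0, hk⟩) := by
      intro i x hx
      have := distLE_trans' (hd i) hx
      exact distLE_mono' hmul.le this
    exact ⟨hmem, (transfer_realize hloc G _ b hmem hball).1 hreal⟩
  -- Lemma B
  have lemB : ∀ (a : V) (t : Fin k → ↥(ball G ((2 * k - 1) * r) a)),
      ((t ⟨0, hk⟩ : V) = a) →
      (letI := (G.induce (ball G ((2 * k - 1) * r) a)).structure
       φ.Realize t) →
      (letI := G.structure
       φ.Realize (fun i => (t i : V))) := by
    intro a t ht0 hreal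
    have hc := hcent ↥(ball G ((2 * k - 1) * r) a) (G.induce (ball G ((2 * k - 1) * r) a)) t hreal
    have hd : ∀ i, distLE G ((2 * k - 2) * r) a ↑(t i) := by
      intro i
      have := distLE_coe (dist_bound hk hc i)
      rwa [ht0] at this
    have hb : ∀ i, (t i : V) ∈ ball G ((2 * k - 1) * r) a := fun i => (t i).2
    have hball : ∀ i, ball G r ↑(t i) ⊆ ball G ((2 * k - 1) * r) a := by
      intro i x hx
      exact distLE_mono' hmul.le (distLE_trans' (hd i) hx)
    refine (transfer_realize hloc G (ball G ((2 * k - 1) * r) a) (fun i => (t i : V)) hb hball).2 ?_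
    exact hreal
  -- Counting
  rw [Set.ncard_eq_toFinset_card']
  rw [Finset.card_eq_sum_card_fiberwise
    (f := fun b : Fin k → V => b ⟨0, hk⟩) (t := Finset.univ) (fun x _ => Finset.mem_univ _)]
  refine Finset.sum_congr rfl fun a _ => ?_
  have hinj : Function.Injective
      (fun (t : Fin k → ↥(ball G ((2 * k - 1) * r) a)) => (fun i => (↑(t i) : V))) := by
    intro t1 t2 h
    funext i
    exact Subtype.ext (congrFun h i)
  have himg : (fun (t : Fin k → ↥(ball G ((2 * k - 1) * r) a)) => (fun i => (↑(t i) : V))) ''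
      {t : Fin k → ball G ((2 * k - 1) * r) a |
        (t ⟨0, hk⟩ : V) = a ∧
        (letI := (G.induce (ball G ((2 * k - 1) * r) a)).structure
         φ.Realize t)} =
      {b : Fin k → V | (letI := G.structure; φ.Realize b) ∧ b ⟨0, hk⟩ = a} := by
    ext b
    constructor
    · rintro ⟨t, ⟨ht0, htr⟩, rfl⟩
      exact ⟨lemB a t ht0 htr, ht0⟩
    · rintro ⟨hb, h0⟩
      obtain ⟨hmem, hreal⟩ := lemA b hb
      subst h0
      exact ⟨fun i => ⟨b i, hmem i⟩, ⟨rfl, hreal⟩, rfl⟩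
  rw [← Set.ncard_image_of_injective _ hinj, himg, Set.ncard_eq_toFinset_card']
  congr 1
  ext b
  simp [Set.mem_toFinset]
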